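/- Barrington's theorem: every Boolean function computed by a fan-in-2 Boolean circuit of depth d can be computed by a width-5 permutation branching program of length at most 4^d. -/

import Mathlib

open Equiv

/-- Fan-in-2 Boolean circuits over {AND, OR, NOT} with `n` input variables. -/
inductive Circuit (n : ℕ) : Type
  | var : Fin n → Circuit n
  | not : Circuit n → Circuit n
  | and : Circuit n → Circuit n → Circuit n
  | or : Circuit n → Circuit n → Circuit n

namespace Circuit

def eval {n : ℕ} : Circuit n → (Fin n → Bool) → Bool
  | var i, x => x i
  | not C, x => !(C.eval x)
  | and C₁ C₂, x => C₁.eval x && C₂.eval x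
  | or C₁ C₂, x => C₁.eval x || C₂.eval x

def depth {n : ℕ} : Circuit n → ℕ
  | var _ => 0
  | not C => C.depth + 1
  | and C₁ C₂ => max C₁.depth C₂.depth + 1
  | or C₁ C₂ => max C₁.depth C₂.depth + 1

end Circuit

/-- A width-5 permutation branching program on `n` input bits: a list of
instructions `⟨i, σ¹, σ⁰⟩`. -/
def BP (n : ℕ) : Type := List (Fin n × Equiv.Perm (Fin 5) × Equiv.Perm (Fin 5))

/-- Executing a width-5 permutation branching program on input `x`:
compose, instruction by instruction, `σ¹` if `x i = 1` and `σ⁰` if `x i = 0`. -/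
def BP.exec {n : ℕ} (prog : BP n) (x : Fin n → Bool) : Equiv.Perm (Fin 5) :=
  (prog.map (fun ins => if x ins.1 then ins.2.1 else ins.2.2)).prod

/- ### Auxiliary material for Barrington's theorem -/

private def c1 : Equiv.Perm (Fin 5) := ⟨![1,2,3,4,0], ![4,0,1,2,3], by decide, by decide⟩
private def c2 : Equiv.Perm (Fin 5) := ⟨![2,0,4,1,3], ![1,3,0,4,2], by decide, by decide⟩
private def tau0 : Equiv.Perm (Fin 5) := c1 * c2 * c1⁻¹ * c2⁻¹

private lemma cycle5 (σ : Equiv.Perm (Fin 5)) (h5 : σ ^ 5 = 1) (h1 : σ ≠ 1)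
    (hs : σ.support.card = 5) : σ.IsCycle ∧ σ.support.card = 5 := by
  refine ⟨Equiv.Perm.isCycle_of_prime_order'' (by simp; norm_num) ?_, hs⟩
  have hd : orderOf σ ∣ 5 := orderOf_dvd_of_pow_eq_one h5
  rcases (Nat.prime_five).eq_one_or_self_of_dvd _ hd with h | h
  · exact absurd (orderOf_eq_one_iff.mp h) h1
  · simpa using h

private lemma tau0_cycle : tau0.IsCycle ∧ tau0.support.card = 5 :=
  cycle5 _ (by decide) (by decide) (by decide)
private lemma c1_cycle : c1.IsCycle ∧ c1.support.card = 5 :=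
  cycle5 _ (by decide) (by decide) (by decide)
private lemma c2_cycle : c2.IsCycle ∧ c2.support.card = 5 :=
  cycle5 _ (by decide) (by decide) (by decide)

private lemma inv_cycle {σ : Equiv.Perm (Fin 5)} (h : σ.IsCycle ∧ σ.support.card = 5) :
    σ⁻¹.IsCycle ∧ σ⁻¹.support.card = 5 := by
  refine ⟨h.1.inv, ?_⟩
  rw [Equiv.Perm.support_inv]; exact h.2

private abbrev Ins (n : ℕ) := Fin n × Equiv.Perm (Fin 5) × Equiv.Perm (Fin 5)

/-- Exec of a concatenation. -/
private lemma BP.exec_append {n : ℕ} (p q : List (Ins n)) (x : Fin n → Bool) :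
    BP.exec (p ++ q) x = BP.exec p x * BP.exec q x := by
  simp [BP.exec, List.map_append]

/-- Conjugating every instruction conjugates the output. -/
private def BP.conj {n : ℕ} (α : Equiv.Perm (Fin 5)) (p : List (Ins n)) : BP n :=
  p.map (fun ins => (ins.1, α * ins.2.1 * α⁻¹, α * ins.2.2 * α⁻¹))

private lemma BP.conj_length {n : ℕ} (α : Equiv.Perm (Fin 5)) (p : List (Ins n)) :
    (BP.conj α p).length = p.length := List.length_map _

private lemma BP.exec_conj {n : ℕ} (α : Equiv.Perm (Fin 5)) (p : List (Ins n)) (x : Fin n → Bool) :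
    BP.exec (BP.conj α p) x = α * BP.exec p x * α⁻¹ := by
  induction p with
  | nil => simp [BP.conj, BP.exec]
  | cons ins rest ih =>
      simp only [BP.conj, BP.exec, List.map_cons, List.prod_cons] at *
      rw [ih]
      by_cases h : x ins.1 <;> simp [h, mul_assoc]

/-- Multiply the *last* instruction of a program by a constant on the right. -/
private def BP.mulConst {n : ℕ} : List (Ins n) → Equiv.Perm (Fin 5) → List (Ins n)
  | [], _ => []
  | [ins], π => [(ins.1, ins.2.1 * π, ins.2.2 * π)]
  | ins :: rest, π => ins :: BP.mulConst rest π

private lemma BP.mulConst_length {n : ℕ} (p : List (Ins n)) (π : Equiv.Perm (Fin 5)) :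
    (BP.mulConst p π).length = p.length := by
  induction p with
  | nil => rfl
  | cons ins rest ih =>
      cases rest with
      | nil => rfl
      | cons b t => simpa [BP.mulConst] using ih

private lemma BP.exec_mulConst {n : ℕ} (p : List (Ins n)) (hp : p ≠ [])
    (π : Equiv.Perm (Fin 5)) (x : Fin n → Bool) :
    BP.exec (BP.mulConst p π) x = BP.exec p x * π := by
  induction p with
  | nil => exact absurd rfl hp
  | cons ins rest ih =>
      cases rest with
      | nil =>
          by_cases h : x ins.1 <;> simp [BP.mulConst, BP.exec, h]
      | cons b t =>
          have := ih (by simp)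
          simp only [BP.mulConst, BP.exec, List.map_cons, List.prod_cons] at *
          rw [this]; simp [mul_assoc]

/-- Every circuit contains a variable. -/
private def Circuit.firstVar {n : ℕ} : Circuit n → Fin n
  | .var i => i
  | .not C => C.firstVar
  | .and C₁ _ => C₁.firstVar
  | .or C₁ _ => C₁.firstVar

private lemma barrington_aux {n : ℕ} (C : Circuit n) (τ : Equiv.Perm (Fin 5))
    (hτ : τ.IsCycle ∧ τ.support.card = 5) :
    ∃ prog : List (Ins n), prog ≠ [] ∧ prog.length ≤ 4 ^ C.depth ∧
      ∀ x : Fin n → Bool, BP.exec prog x = if C.eval x then τ else 1 := by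
  induction C generalizing τ with
  | var i =>
      refine ⟨[(i, τ, 1)], by simp, by simp [Circuit.depth], fun x => ?_⟩
      by_cases h : x i <;> simp [BP.exec, Circuit.eval, h]
  | not C ih =>
      obtain ⟨p, hne, hlen, hex⟩ := ih τ⁻¹ (inv_cycle hτ)
      refine ⟨BP.mulConst p τ, ?_, ?_, fun x => ?_⟩
      · intro h; apply hne
        have := congrArg List.length h
        rw [BP.mulConst_length] at this
        exact List.length_eq_zero_iff.mp this
      · rw [BP.mulConst_length, Circuit.depth]
        exact hlen.trans (Nat.pow_le_pow_right (by norm_num) (Nat.le_succ _))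
      · rw [BP.exec_mulConst p hne τ x, hex x, Circuit.eval]
        cases h : C.eval x <;> simp [h]
  | and C₁ C₂ ih₁ ih₂ =>
      obtain ⟨α, hα⟩ := isConj_iff.mp (tau0_cycle.1.isConj hτ.1 (by rw [tau0_cycle.2, hτ.2]))
      obtain ⟨p₁, h1ne, h1len, h1ex⟩ := ih₁ c1 c1_cycle
      obtain ⟨p₂, h2ne, h2len, h2ex⟩ := ih₂ c2 c2_cycle
      obtain ⟨p₃, h3ne, h3len, h3ex⟩ := ih₁ c1⁻¹ (inv_cycle c1_cycle)
      obtain ⟨p₄, h4ne, h4len, h4ex⟩ := ih₂ c2⁻¹ (inv_cycle c2_cycle)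
      refine ⟨BP.conj α (p₁ ++ p₂ ++ p₃ ++ p₄), ?_, ?_, fun x => ?_⟩
      · simp [BP.conj, h1ne]
      · rw [BP.conj_length]
        simp only [List.length_append, Circuit.depth, pow_succ]
        have e1 : p₁.length ≤ 4 ^ max C₁.depth C₂.depth :=
          h1len.trans (Nat.pow_le_pow_right (by norm_num) (le_max_left _ _))
        have e3 : p₃.length ≤ 4 ^ max C₁.depth C₂.depth :=
          h3len.trans (Nat.pow_le_pow_right (by norm_num) (le_max_left _ _))
        have e2 : p₂.length ≤ 4 ^ max C₁.depth C₂.depth :=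
          h2len.trans (Nat.pow_le_pow_right (by norm_num) (le_max_right _ _))
        have e4 : p₄.length ≤ 4 ^ max C₁.depth C₂.depth :=
          h4len.trans (Nat.pow_le_pow_right (by norm_num) (le_max_right _ _))
        omega
      · rw [BP.exec_conj, BP.exec_append, BP.exec_append, BP.exec_append,
          h1ex, h2ex, h3ex, h4ex, Circuit.eval]
        cases h₁ : C₁.eval x <;> cases h₂ : C₂.eval x <;>
          simp [← hα, tau0, mul_assoc]
  | or C₁ C₂ ih₁ ih₂ =>
      obtain ⟨α, hα⟩ := isConj_iff.mp
        ((inv_cycle tau0_cycle).1.isConj hτ.1 (by rw [(inv_cycle tau0_cycle).2, hτ.2]))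
      obtain ⟨p₁, h1ne, h1len, h1ex⟩ := ih₁ c1⁻¹ (inv_cycle c1_cycle)
      obtain ⟨p₂, h2ne, h2len, h2ex⟩ := ih₂ c2⁻¹ (inv_cycle c2_cycle)
      obtain ⟨p₃, h3ne, h3len, h3ex⟩ := ih₁ c1 c1_cycle
      obtain ⟨p₄, h4ne, h4len, h4ex⟩ := ih₂ c2 c2_cycle
      -- q₁ computes (if e₁ then 1 else c1), etc.
      refine ⟨BP.conj α (BP.mulConst
        (BP.mulConst p₁ c1 ++ BP.mulConst p₂ c2 ++ BP.mulConst p₃ c1⁻¹ ++ BP.mulConst p₄ c2⁻¹)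
        tau0⁻¹), ?_, ?_, fun x => ?_⟩
      case _ =>
        have h4ne' : BP.mulConst p₄ c2⁻¹ ≠ [] := by
          intro h
          have := congrArg List.length h
          rw [BP.mulConst_length] at this
          exact h4ne (List.length_eq_zero_iff.mp this)
        intro h
        have := congrArg List.length h
        rw [BP.conj_length, BP.mulConst_length] at this
        simp only [List.length_append, List.length_nil] at this
        rw [BP.mulConst_length] at this
        exact h1ne (List.length_eq_zero_iff.mp (by omega))
      case _ =>
        rw [BP.conj_length, BP.mulConst_length]
        simp only [List.length_append, BP.mulConst_length, Circuit.depth, pow_succ]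
        have e1 : p₁.length ≤ 4 ^ max C₁.depth C₂.depth :=
          h1len.trans (Nat.pow_le_pow_right (by norm_num) (le_max_left _ _))
        have e3 : p₃.length ≤ 4 ^ max C₁.depth C₂.depth :=
          h3len.trans (Nat.pow_le_pow_right (by norm_num) (le_max_left _ _))
        have e2 : p₂.length ≤ 4 ^ max C₁.depth C₂.depth :=
          h2len.trans (Nat.pow_le_pow_right (by norm_num) (le_max_right _ _))
        have e4 : p₄.length ≤ 4 ^ max C₁.depth C₂.depth :=
          h4len.trans (Nat.pow_le_pow_right (by norm_num) (le_max_right _ _))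
        omega
      case _ =>
        have hbigne : (BP.mulConst p₁ c1 ++ BP.mulConst p₂ c2 ++ BP.mulConst p₃ c1⁻¹ ++
            BP.mulConst p₄ c2⁻¹) ≠ [] := by
          simp only [ne_eq, List.append_eq_nil_iff]
          intro h
          apply h1ne
          have := congrArg List.length h.1.1.1
          rw [BP.mulConst_length] at this
          exact List.length_eq_zero_iff.mp this
        rw [BP.exec_conj, BP.exec_mulConst _ hbigne, BP.exec_append, BP.exec_append,
          BP.exec_append, BP.exec_mulConst _ h1ne, BP.exec_mulConst _ h2ne,
          BP.exec_mulConst _ h3ne, BP.exec_mulConst _ h4ne,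
          h1ex, h2ex, h3ex, h4ex, Circuit.eval]
        cases h₁ : C₁.eval x <;> cases h₂ : C₂.eval x <;>
          simp [← hα, tau0, mul_assoc]

/-- Barrington's theorem: every Boolean function computed by a fan-in-2 Boolean
circuit of depth `d` is computed by a width-5 permutation branching program of
length at most `4 ^ d` (the program outputs a fixed 5-cycle on accepted inputs
and the identity on rejected inputs). -/
theorem barrington {n : ℕ} (C : Circuit n) :
    ∃ (prog : BP n) (τ : Equiv.Perm (Fin 5)),
      τ.IsCycle ∧ τ.support.card = 5 ∧
      prog.length ≤ 4 ^ C.depth ∧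
      ∀ x : Fin n → Bool, prog.exec x = if C.eval x then τ else 1 := by
  obtain ⟨prog, _, hlen, hex⟩ := barrington_aux C tau0 tau0_cycle
  exact ⟨prog, tau0, tau0_cycle.1, tau0_cycle.2, hlen, hex⟩
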